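/- Let m ∈ ℕ with m ≥ 1, let Δ > 0 and ε > 0, and let ν = Exp(2Δ/ε) be the exponential measure with scale 2Δ/ε. For scores s : Fin m → ℝ and an index i, let A_i(s) = {η ∈ ℝ^m : ∀ j ≠ i, s(i) + η(i) > s(j) + η(j)}. Then for all s, s' : Fin m → ℝ with |s(j) − s'(j)| ≤ Δ for every j, and every index i: ν^{⊗m}(A_i(s)) ≤ exp(ε) · ν^{⊗m}(A_i(s')). (Report-Noisy-Max with exponential noise of scale 2Δ/ε, i.e., the Permute-and-Flip mechanism, satisfies ε-differential privacy.) -/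

import Mathlib

open MeasureTheory
open scoped ENNReal

/-- The exponential measure `Exp(λ)` with scale `λ`, with density `x ↦ (1/λ)·exp(−x/λ)`
for `x ≥ 0` (and `0` for `x < 0`) with respect to Lebesgue measure. -/
noncomputable def expMeasureScale (l : ℝ) : Measure ℝ :=
  volume.withDensity fun x =>
    ENNReal.ofReal (if 0 ≤ x then 1 / l * Real.exp (-x / l) else 0)

lemma expDensity_measurable (l : ℝ) :
    Measurable fun x : ℝ =>
      ENNReal.ofReal (if 0 ≤ x then 1 / l * Real.exp (-x / l) else 0) := by
  apply Measurable.ennreal_ofReal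
  exact Measurable.ite measurableSet_Ici
    (measurable_const.mul ((Real.continuous_exp.measurable).comp (by fun_prop)))
    measurable_const

lemma expMeasureScale_sigmaFinite (l : ℝ) : SigmaFinite (expMeasureScale l) :=
  SigmaFinite.withDensity_of_ne_top' (fun _ => ENNReal.ofReal_ne_top)

/-- 1-d shift lemma: shifting neighbourhoods right by `c ≥ 0` loses at most `exp (c/l)`. -/
lemma expMeasureScale_le_shift {l : ℝ} (hl : 0 < l) {c : ℝ} (hc : 0 ≤ c)
    {B : Set ℝ} (hB : MeasurableSet B) :
    expMeasureScale l B ≤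
      ENNReal.ofReal (Real.exp (c / l)) * expMeasureScale l ((fun x => x - c) ⁻¹' B) := by
  set f : ℝ → ℝ≥0∞ :=
    fun x => ENNReal.ofReal (if 0 ≤ x then 1 / l * Real.exp (-x / l) else 0) with hf
  have hfm : Measurable f := expDensity_measurable l
  have hBc : MeasurableSet ((fun x => x - c) ⁻¹' B) :=
    hB.preimage (measurable_id.sub_const c)
  have h1 : expMeasureScale l B = ∫⁻ x in B, f x := by
    rw [expMeasureScale, withDensity_apply _ hB]
  have h2 : expMeasureScale l ((fun x => x - c) ⁻¹' B) = ∫⁻ x in B, f (x + c) := by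
    rw [expMeasureScale, withDensity_apply _ hBc, ← lintegral_indicator hBc,
      ← lintegral_indicator hB]
    have key : ∀ x : ℝ, ((fun x => x - c) ⁻¹' B).indicator f x
        = (B.indicator fun t => f (t + c)) (x + -c) := by
      intro x
      by_cases h : x - c ∈ B
      · have h' : x + -c ∈ B := by simpa [sub_eq_add_neg] using h
        simp [Set.indicator, h, h', sub_add_cancel, sub_eq_add_neg]
      · have h' : ¬ (x + -c ∈ B) := by simpa [sub_eq_add_neg] using h
        simp [Set.indicator, h, h']
    simp_rw [← hf, key]
    exact lintegral_add_right_eq_self (B.indicator fun t => f (t + c)) (-c)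
  have hpt : ∀ x : ℝ, f x ≤ ENNReal.ofReal (Real.exp (c / l)) * f (x + c) := by
    intro x
    by_cases h : 0 ≤ x
    · have h2' : 0 ≤ x + c := by linarith
      have hexp : Real.exp (c / l) * (1 / l * Real.exp (-(x + c) / l))
          = 1 / l * Real.exp (-x / l) := by
        rw [mul_left_comm, ← Real.exp_add]
        congr 2
        field_simp
        ring
      rw [hf]
      simp only [h, h2', if_pos]
      rw [← ENNReal.ofReal_mul (Real.exp_nonneg _), hexp]
    · rw [hf]
      simp [h]
  calc expMeasureScale l B = ∫⁻ x in B, f x := h1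
    _ ≤ ∫⁻ x in B, ENNReal.ofReal (Real.exp (c / l)) * f (x + c) :=
        lintegral_mono fun x => hpt x
    _ = ENNReal.ofReal (Real.exp (c / l)) * ∫⁻ x in B, f (x + c) :=
        lintegral_const_mul' _ _ ENNReal.ofReal_ne_top
    _ = ENNReal.ofReal (Real.exp (c / l)) * expMeasureScale l ((fun x => x - c) ⁻¹' B) := by
        rw [h2]

/-- Report-Noisy-Max with i.i.d. exponential noise of scale `2Δ/ε` (the Permute-and-Flip
mechanism) satisfies `ε`-DP: for score vectors `s, s'` with `|s(j) − s'(j)| ≤ Δ` for all `j`,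
the probability that candidate `i` wins under `s` is at most `exp(ε)` times the probability
that it wins under `s'`. -/
theorem report_noisy_max_exponential_dp (m : ℕ) (hm : 1 ≤ m) (Δ ε : ℝ) (hΔ : 0 < Δ)
    (hε : 0 < ε) (s s' : Fin m → ℝ) (hsens : ∀ j, |s j - s' j| ≤ Δ) (i : Fin m) :
    (Measure.pi fun _ : Fin m => expMeasureScale (2 * Δ / ε))
        {η : Fin m → ℝ | ∀ j, j ≠ i → s i + η i > s j + η j} ≤
      ENNReal.ofReal (Real.exp ε) *
        (Measure.pi fun _ : Fin m => expMeasureScale (2 * Δ / ε))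
          {η : Fin m → ℝ | ∀ j, j ≠ i → s' i + η i > s' j + η j} := by
  obtain ⟨n, rfl⟩ : ∃ n, m = n + 1 := ⟨m - 1, (Nat.succ_pred_eq_of_pos hm).symm⟩
  set l : ℝ := 2 * Δ / ε with hldef
  have hl : 0 < l := div_pos (by linarith) hε
  set ν : Measure ℝ := expMeasureScale l with hν
  haveI : SigmaFinite ν := expMeasureScale_sigmaFinite l
  -- abbreviations
  set A : (Fin (n + 1) → ℝ) → Set (Fin (n + 1) → ℝ) :=
    fun t => {η | ∀ j, j ≠ i → t i + η i > t j + η j} with hAdef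
  set slice : (Fin (n + 1) → ℝ) → (Fin n → ℝ) → Set ℝ :=
    fun t y => {x | ∀ k : Fin n, t (i.succAbove k) + y k < t i + x} with hslicedef
  have hA : ∀ t, MeasurableSet (A t) := by
    intro t
    have : A t = ⋂ j, {η : Fin (n + 1) → ℝ | j ≠ i → t j + η j < t i + η i} := by
      ext η; simp [hAdef, Set.mem_iInter, gt_iff_lt]
    rw [this]
    refine MeasurableSet.iInter fun j => ?_
    by_cases h : j = i
    · simp [h]
    · have : {η : Fin (n + 1) → ℝ | j ≠ i → t j + η j < t i + η i}
          = {η : Fin (n + 1) → ℝ | t j + η j < t i + η i} := by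
        ext η; simp [h]
      rw [this]
      exact measurableSet_lt (measurable_const.add (measurable_pi_apply j))
        (measurable_const.add (measurable_pi_apply i))
  have hslice : ∀ t y, MeasurableSet (slice t y) := by
    intro t y
    have : slice t y = ⋂ k, {x : ℝ | t (i.succAbove k) + y k < t i + x} := by
      ext x; simp [hslicedef]
    rw [this]
    exact MeasurableSet.iInter fun k =>
      measurableSet_lt measurable_const (measurable_const.add measurable_id)
  -- decomposition of the pi measure
  set e := MeasurableEquiv.piFinSuccAbove (fun _ : Fin (n + 1) => ℝ) i with he
  have hpres := measurePreserving_piFinSuccAbove (fun _ : Fin (n + 1) => ν) i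
  have key : ∀ t : Fin (n + 1) → ℝ,
      (Measure.pi fun _ : Fin (n + 1) => ν) (A t)
        = ∫⁻ y, ν (slice t y) ∂(Measure.pi fun _ : Fin n => ν) := by
    intro t
    have h1 : (Measure.pi fun _ : Fin (n + 1) => ν) (A t)
        = (ν.prod (Measure.pi fun _ : Fin n => ν)) (e.symm ⁻¹' A t) :=
      ((MeasurePreserving.symm e hpres).measure_preimage (hA t).nullMeasurableSet).symm
    rw [h1, Measure.prod_apply_symm ((hA t).preimage e.symm.measurable)]
    congr 1
    ext y
    congr 1
    ext x
    have hmem : e.symm (x, y) = i.insertNth x y := rfl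
    simp only [Set.mem_preimage, hmem, hAdef, Set.mem_setOf_eq, hslicedef]
    constructor
    · intro h k
      have hk := h (i.succAbove k) (Fin.succAbove_ne i k)
      simpa [Fin.insertNth_apply_same, Fin.insertNth_apply_succAbove] using hk
    · intro h j hj
      obtain ⟨k, rfl⟩ := Fin.exists_succAbove_eq hj
      simpa [Fin.insertNth_apply_same, Fin.insertNth_apply_succAbove] using h k
  rw [key s, key s']
  have hcl : (2 * Δ) / l = ε := by
    rw [hldef]
    field_simp
  have step : ∀ y : Fin n → ℝ,
      ν (slice s y) ≤ ENNReal.ofReal (Real.exp ε) * ν (slice s' y) := by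
    intro y
    have h1 := expMeasureScale_le_shift hl (c := 2 * Δ) (by linarith) (hslice s y)
    rw [hcl] at h1
    refine h1.trans ?_
    refine mul_le_mul_right (measure_mono ?_) _
    intro x hx
    simp only [Set.mem_preimage, hslicedef, Set.mem_setOf_eq] at hx ⊢
    intro k
    have h2 := hx k
    have h3 := abs_le.mp (hsens (i.succAbove k))
    have h4 := abs_le.mp (hsens i)
    linarith [h3.1, h3.2, h4.1, h4.2, h2]
  calc (∫⁻ y, ν (slice s y) ∂(Measure.pi fun _ : Fin n => ν))
      ≤ ∫⁻ y, ENNReal.ofReal (Real.exp ε) * ν (slice s' y)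
          ∂(Measure.pi fun _ : Fin n => ν) := lintegral_mono step
    _ = ENNReal.ofReal (Real.exp ε) * ∫⁻ y, ν (slice s' y)
          ∂(Measure.pi fun _ : Fin n => ν) :=
        lintegral_const_mul' _ _ ENNReal.ofReal_ne_top
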